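/- (Theorem 4.2, exponential form of the maximum entropy model.) Let C = {X_1,…,X_k} be a collection of itemsets and Φ = (f_1,…,f_k) ∈ [0,1]^k. Suppose P_{C,Φ} contains a distribution p̃ with p̃(t) > 0 for every transaction t ∈ T, and let p* be a maximum-entropy distribution for ⟨C,Φ⟩. Then p* has exponential form over C, i.e., there exist reals u_0 > 0 and u_{X_1},…,u_{X_k} > 0 such that p*(t) = u_0 ∏_{i=1}^k u_{X_i}^{S_{X_i}(t)} for every t ∈ T. -/

import Mathlib

open scoped BigOperators

/-- A transaction over `N` items: an element of `{0,1}^N`. -/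
abbrev Transaction (N : ℕ) := Fin N → Bool

/-- A transaction `t` supports an itemset `X` iff `t i = 1` for all `i ∈ X`. -/
def supports {N : ℕ} (X : Finset (Fin N)) (t : Transaction N) : Prop :=
  ∀ i ∈ X, t i = true

instance {N : ℕ} (X : Finset (Fin N)) (t : Transaction N) : Decidable (supports X t) :=
  inferInstanceAs (Decidable (∀ i ∈ X, t i = true))

/-- A distribution on `{0,1}^N`: values in `[0,1]` summing to one. -/
def IsDistr {N : ℕ} (p : Transaction N → ℝ) : Prop :=
  (∀ t, 0 ≤ p t ∧ p t ≤ 1) ∧ ∑ t, p t = 1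

/-- `p(X = 1)`: the probability that a transaction supports `X`. -/
def probOne {N : ℕ} (p : Transaction N → ℝ) (X : Finset (Fin N)) : ℝ :=
  ∑ t, if supports X t then p t else 0

/-- Binary entropy `H(p) = -∑ p(t) log₂ p(t)` (with `0·log₂ 0 = 0`, as `Real.logb 2 0 = 0`). -/
noncomputable def entropy {N : ℕ} (p : Transaction N → ℝ) : ℝ :=
  - ∑ t, p t * Real.logb 2 (p t)


lemma entropy_eq {N : ℕ} (p : Transaction N → ℝ) :
    entropy p = (∑ t, Real.negMulLog (p t)) / Real.log 2 := by
  simp only [entropy, Real.negMulLog, Real.logb, Finset.sum_div]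
  rw [← Finset.sum_neg_distrib]
  congr 1 with t
  ring

lemma negMulLog_le_one {x : ℝ} (h0 : 0 ≤ x) : Real.negMulLog x ≤ 1 := by
  rcases eq_or_lt_of_le h0 with h | h
  · rw [← h]; simp [Real.negMulLog]
  · have hx : Real.negMulLog x = x * Real.log x⁻¹ := by
      simp only [Real.negMulLog, Real.log_inv]; ring
    rw [hx]
    have hlog : Real.log x⁻¹ ≤ x⁻¹ - 1 := Real.log_le_sub_one_of_pos (by positivity)
    calc x * Real.log x⁻¹ ≤ x * (x⁻¹ - 1) := by nlinarith
      _ = 1 - x := by field_simp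
      _ ≤ 1 := by linarith

lemma sum_negMulLog_le {N k : ℕ}
    (X : Fin k → Finset (Fin N)) (f : Fin k → ℝ)
    (pstar : Transaction N → ℝ)
    (hpstarMax : ∀ q : Transaction N → ℝ, IsDistr q → (∀ i, probOne q (X i) = f i) →
      entropy q ≤ entropy pstar)
    (q : Transaction N → ℝ) (hq : IsDistr q) (hqC : ∀ i, probOne q (X i) = f i) :
    ∑ t, Real.negMulLog (q t) ≤ ∑ t, Real.negMulLog (pstar t) := by
  have h := hpstarMax q hq hqC
  rw [entropy_eq, entropy_eq] at h
  exact (div_le_div_iff_of_pos_right (Real.log_pos one_lt_two)).mp h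

lemma pstar_pos {N k : ℕ}
    (X : Fin k → Finset (Fin N)) (f : Fin k → ℝ)
    (ptilde : Transaction N → ℝ) (hptilde : IsDistr ptilde)
    (hptildeC : ∀ i, probOne ptilde (X i) = f i)
    (hptildePos : ∀ t, 0 < ptilde t)
    (pstar : Transaction N → ℝ) (hpstar : IsDistr pstar)
    (hpstarC : ∀ i, probOne pstar (X i) = f i)
    (hpstarMax : ∀ q : Transaction N → ℝ, IsDistr q → (∀ i, probOne q (X i) = f i) →
      entropy q ≤ entropy pstar) :
    ∀ t, 0 < pstar t := by
  intro t0
  by_contra hcon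
  push_neg at hcon
  have ht0 : pstar t0 = 0 := le_antisymm hcon (hpstar.1 t0).1
  set b : ℝ := ptilde t0 with hbdef
  have hb : 0 < b := hptildePos t0
  set C : ℝ := (Fintype.card (Transaction N) : ℝ) with hCdef
  have hC0 : 0 < C := by
    simp only [hCdef]
    exact_mod_cast Fintype.card_pos
  set ε : ℝ := min (1/2) (Real.exp (-(C/b + Real.log b + 1))) with hεdef
  have hε0 : 0 < ε := lt_min (by norm_num) (Real.exp_pos _)
  have hε1 : ε ≤ 1/2 := min_le_left _ _
  have hlogε : Real.log ε ≤ -(C/b + Real.log b + 1) := by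
    calc Real.log ε ≤ Real.log (Real.exp (-(C/b + Real.log b + 1))) :=
          Real.log_le_log hε0 (min_le_right _ _)
      _ = -(C/b + Real.log b + 1) := Real.log_exp _
  have hCb : b * (C/b) = C := by field_simp
  have hkey : ε * C < Real.negMulLog (ε * b) := by
    rw [Real.negMulLog, Real.log_mul hε0.ne' hb.ne']
    have h1 : Real.log ε + Real.log b ≤ -(C/b + 1) := by linarith
    nlinarith [mul_pos hε0 hb, mul_le_mul_of_nonneg_left h1 (le_of_lt (mul_pos hε0 hb))]
  set q : Transaction N → ℝ := fun t => (1-ε) * pstar t + ε * ptilde t with hqdef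
  have hqsum : ∑ t, q t = 1 := by
    simp only [hqdef, Finset.sum_add_distrib, ← Finset.mul_sum, hpstar.2, hptilde.2]
    ring
  have hqnn : ∀ t, 0 ≤ q t := by
    intro t
    have h1 := mul_nonneg (by linarith : (0:ℝ) ≤ 1-ε) (hpstar.1 t).1
    have h2 := mul_nonneg hε0.le (hptildePos t).le
    simp only [hqdef]
    linarith
  have hqd : IsDistr q := by
    refine ⟨fun t => ⟨hqnn t, ?_⟩, hqsum⟩
    calc q t ≤ ∑ s, q s := Finset.single_le_sum (fun s _ => hqnn s) (Finset.mem_univ t)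
      _ = 1 := hqsum
  have hqC : ∀ i, probOne q (X i) = f i := by
    intro i
    have hsp : probOne q (X i)
        = (1-ε) * probOne pstar (X i) + ε * probOne ptilde (X i) := by
      simp only [probOne, Finset.mul_sum, ← Finset.sum_add_distrib]
      congr 1 with t
      split_ifs <;> simp [hqdef]
    rw [hsp, hpstarC i, hptildeC i]; ring
  have hEle := sum_negMulLog_le X f pstar hpstarMax q hqd hqC
  have hterm : ∀ t, Real.negMulLog (pstar t) - ε ≤ Real.negMulLog (q t) := by
    intro t
    have hmem1 : pstar t ∈ Set.Ici (0:ℝ) := (hpstar.1 t).1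
    have hmem2 : ptilde t ∈ Set.Ici (0:ℝ) := (hptildePos t).le
    have hcc := Real.concaveOn_negMulLog.2 hmem1 hmem2
      (by linarith : (0:ℝ) ≤ 1 - ε) hε0.le (by ring)
    simp only [smul_eq_mul] at hcc
    have h1 : Real.negMulLog (pstar t) ≤ 1 := negMulLog_le_one (hpstar.1 t).1
    have h2 : 0 ≤ Real.negMulLog (ptilde t) :=
      Real.negMulLog_nonneg (hptildePos t).le (hptilde.1 t).2
    have h3 : 0 ≤ Real.negMulLog (pstar t) :=
      Real.negMulLog_nonneg (hpstar.1 t).1 (hpstar.1 t).2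
    nlinarith
  have hq0 : q t0 = ε * b := by simp [hqdef, ht0, hbdef]
  have hsplit1 := Finset.add_sum_erase Finset.univ
    (fun t => Real.negMulLog (q t)) (Finset.mem_univ t0)
  have hsplit2 := Finset.add_sum_erase Finset.univ
    (fun t => Real.negMulLog (pstar t)) (Finset.mem_univ t0)
  have hbound : ∑ t ∈ Finset.univ.erase t0, (Real.negMulLog (pstar t) - ε)
      ≤ ∑ t ∈ Finset.univ.erase t0, Real.negMulLog (q t) :=
    Finset.sum_le_sum (fun t _ => hterm t)
  have hcard : ((Finset.univ.erase t0).card : ℝ) ≤ C := by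
    simp only [hCdef]
    exact_mod_cast Finset.card_le_card (Finset.subset_univ _)
  rw [Finset.sum_sub_distrib, Finset.sum_const, nsmul_eq_mul] at hbound
  have hεcard : ((Finset.univ.erase t0).card : ℝ) * ε ≤ C * ε :=
    mul_le_mul_of_nonneg_right hcard hε0.le
  have hp0 : Real.negMulLog (pstar t0) = 0 := by simp [ht0, Real.negMulLog]
  simp only [hq0] at hsplit1
  simp only [hp0] at hsplit2
  linarith [hsplit1, hsplit2, hEle, hbound, hkey, hεcard]

lemma stationarity {N k : ℕ}
    (X : Fin k → Finset (Fin N)) (f : Fin k → ℝ)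
    (pstar : Transaction N → ℝ) (hpstar : IsDistr pstar)
    (hpstarC : ∀ i, probOne pstar (X i) = f i)
    (hpstarMax : ∀ q : Transaction N → ℝ, IsDistr q → (∀ i, probOne q (X i) = f i) →
      entropy q ≤ entropy pstar)
    (hpos : ∀ t, 0 < pstar t)
    (v : Transaction N → ℝ) (hv1 : ∑ t, v t = 0)
    (hv2 : ∀ i, ∑ t, (if supports (X i) t then v t else 0) = 0) :
    ∑ t, v t * Real.log (pstar t) = 0 := by
  set δ : ℝ := Finset.univ.inf' Finset.univ_nonempty (fun t => pstar t / (|v t| + 1))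
    with hδdef
  have hδ0 : 0 < δ := by
    rw [hδdef, Finset.lt_inf'_iff]
    intro t _
    have := hpos t
    positivity
  have hpose : ∀ ε : ℝ, |ε| < δ → ∀ t, 0 < pstar t + ε * v t := by
    intro ε hε t
    have h1 : δ ≤ pstar t / (|v t| + 1) := Finset.inf'_le _ (Finset.mem_univ t)
    have hv0 : (0:ℝ) < |v t| + 1 := by positivity
    have h2 : |ε| * (|v t| + 1) < pstar t := by
      have h3 : |ε| * (|v t| + 1) < δ * (|v t| + 1) :=
        mul_lt_mul_of_pos_right hε hv0
      have h4 : δ * (|v t| + 1) ≤ (pstar t / (|v t| + 1)) * (|v t| + 1) :=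
        mul_le_mul_of_nonneg_right h1 hv0.le
      rw [div_mul_cancel₀ _ hv0.ne'] at h4
      linarith
    have h5 : -(|ε| * |v t|) ≤ ε * v t := by
      rw [← abs_mul]
      exact neg_abs_le _
    nlinarith [abs_nonneg ε, abs_nonneg (v t)]
  set F : ℝ → ℝ := fun ε => ∑ t, Real.negMulLog (pstar t + ε * v t) with hFdef
  have hF0 : F 0 = ∑ t, Real.negMulLog (pstar t) := by simp [hFdef]
  have hmax : IsLocalMax F 0 := by
    rw [IsLocalMax, IsMaxFilter]
    rw [Metric.eventually_nhds_iff]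
    refine ⟨δ, hδ0, ?_⟩
    intro ε hε
    rw [Real.dist_eq, sub_zero] at hε
    set q : Transaction N → ℝ := fun t => pstar t + ε * v t with hqdef
    have hqpos := hpose ε hε
    have hqsum : ∑ t, q t = 1 := by
      simp only [hqdef, Finset.sum_add_distrib, ← Finset.mul_sum, hpstar.2, hv1]
      ring
    have hqd : IsDistr q := by
      refine ⟨fun t => ⟨(hqpos t).le, ?_⟩, hqsum⟩
      calc q t ≤ ∑ s, q s := Finset.single_le_sum (fun s _ => (hqpos s).le)
            (Finset.mem_univ t)
        _ = 1 := hqsum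
    have hqC : ∀ i, probOne q (X i) = f i := by
      intro i
      have hsp : probOne q (X i) = probOne pstar (X i)
          + ε * (∑ t, (if supports (X i) t then v t else 0)) := by
        simp only [probOne, Finset.mul_sum, ← Finset.sum_add_distrib]
        congr 1 with t
        split_ifs <;> simp [hqdef]
      rw [hsp, hpstarC i, hv2 i]; ring
    have := sum_negMulLog_le X f pstar hpstarMax q hqd hqC
    rw [hF0]
    exact this
  set D : ℝ := ∑ t, (-Real.log (pstar t) - 1) * v t with hDdef
  have hder : HasDerivAt F D 0 := by
    rw [hFdef, hDdef]
    apply HasDerivAt.fun_sum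
    intro t _
    have hin : HasDerivAt (fun ε : ℝ => pstar t + ε * v t) (v t) 0 := by
      simpa using ((hasDerivAt_id (0:ℝ)).mul_const (v t)).const_add (pstar t)
    have hout : HasDerivAt Real.negMulLog (-Real.log (pstar t) - 1) (pstar t + 0 * v t) := by
      rw [zero_mul, add_zero]
      exact Real.hasDerivAt_negMulLog (hpos t).ne'
    exact hout.comp 0 hin
  have hD0 : D = 0 := hmax.hasDerivAt_eq_zero hder
  have hexp : D = -(∑ t, v t * Real.log (pstar t)) - ∑ t, v t := by
    rw [hDdef]
    rw [show (∑ t, (-Real.log (pstar t) - 1) * v t)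
        = ∑ t, (-(v t * Real.log (pstar t)) - v t) by congr 1 with t; ring]
    rw [Finset.sum_sub_distrib, Finset.sum_neg_distrib]
  rw [hexp, hv1] at hD0
  linarith

/-- Theorem 4.2: the maximum entropy model has exponential form. -/
theorem maxent_exponential_form {N k : ℕ} (hN : 1 ≤ N)
    (X : Fin k → Finset (Fin N)) (f : Fin k → ℝ)
    (hf : ∀ i, f i ∈ Set.Icc (0 : ℝ) 1)
    -- `P_{C,Φ}` contains a distribution with only nonzero entries:
    (ptilde : Transaction N → ℝ) (hptilde : IsDistr ptilde)
    (hptildeC : ∀ i, probOne ptilde (X i) = f i)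
    (hptildePos : ∀ t, 0 < ptilde t)
    -- `p*` is a maximum-entropy distribution for `⟨C, Φ⟩`:
    (pstar : Transaction N → ℝ) (hpstar : IsDistr pstar)
    (hpstarC : ∀ i, probOne pstar (X i) = f i)
    (hpstarMax : ∀ q : Transaction N → ℝ, IsDistr q → (∀ i, probOne q (X i) = f i) →
      entropy q ≤ entropy pstar) :
    ∃ u0 : ℝ, ∃ u : Fin k → ℝ, 0 < u0 ∧ (∀ i, 0 < u i) ∧
      ∀ t, pstar t = u0 * ∏ i, if supports (X i) t then u i else 1 := by
  have hpos : ∀ t, 0 < pstar t := pstar_pos X f ptilde hptilde hptildeC hptildePos pstar hpstar hpstarC hpstarMax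
  set s : Fin k → Transaction N → ℝ := fun i t => if supports (X i) t then 1 else 0
    with hsdef
  set G : Fin (k+1) → Transaction N → ℝ := Fin.cons (fun _ => 1) s with hGdef
  set toE : (Transaction N → ℝ) →ₗ[ℝ] EuclideanSpace ℝ (Transaction N) :=
    (WithLp.linearEquiv 2 ℝ (Transaction N → ℝ)).symm.toLinearMap with htoEdef
  set g : Fin (k+1) → EuclideanSpace ℝ (Transaction N) := fun j => toE (G j) with hgdef
  set W : Submodule ℝ (EuclideanSpace ℝ (Transaction N)) :=
    Submodule.span ℝ (Set.range g) with hWdef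
  set L : Transaction N → ℝ := fun t => Real.log (pstar t) with hLdef
  have happly : ∀ (x : Transaction N → ℝ) (t : Transaction N), toE x t = x t := by
    intro x t; rfl
  have hinner : ∀ (x : EuclideanSpace ℝ (Transaction N)) (y : Transaction N → ℝ),
      (inner ℝ x (toE y) : ℝ) = ∑ t, x t * y t := by
    intro x y
    simp only [PiLp.inner_apply, RCLike.inner_apply, conj_trivial, happly]
    exact Finset.sum_congr rfl (fun t _ => mul_comm _ _)
  have hLmem : toE L ∈ W := by
    rw [← Submodule.orthogonal_orthogonal W]
    rw [Submodule.mem_orthogonal]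
    intro u hu
    have hu0 : ∀ j, (inner ℝ (g j) u : ℝ) = 0 := by
      intro j
      have hgW : g j ∈ W := Submodule.subset_span (Set.mem_range_self j)
      have := (Submodule.mem_orthogonal W u).mp hu (g j) hgW
      exact this
    have hu1 : ∑ t, u t = 0 := by
      have h := hu0 0
      rw [real_inner_comm, hinner] at h
      simpa [hGdef] using h
    have hu2 : ∀ i, ∑ t, (if supports (X i) t then u t else 0) = 0 := by
      intro i
      have h := hu0 i.succ
      rw [real_inner_comm, hinner] at h
      refine Eq.trans ?_ h
      apply Finset.sum_congr rfl
      intro t _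
      simp only [hGdef, Fin.cons_succ, hsdef]
      split_ifs <;> simp
    have hstat := stationarity X f pstar hpstar hpstarC hpstarMax hpos u hu1 hu2
    rw [hinner]
    exact hstat
  rw [hWdef, Submodule.mem_span_range_iff_exists_fun] at hLmem
  obtain ⟨c, hc⟩ := hLmem
  refine ⟨Real.exp (c 0), fun i => Real.exp (c i.succ), Real.exp_pos _,
    fun i => Real.exp_pos _, ?_⟩
  intro t
  have hLt : L t = c 0 + ∑ i, c i.succ * s i t := by
    have h2 := congrArg (WithLp.linearEquiv 2 ℝ (Transaction N → ℝ)) hc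
    rw [map_sum] at h2
    simp only [map_smul] at h2
    have h3 : (WithLp.linearEquiv 2 ℝ (Transaction N → ℝ)) (toE L) = L := by
      simp [htoEdef]
    have h4 : ∀ j, (WithLp.linearEquiv 2 ℝ (Transaction N → ℝ)) (g j) = G j := by
      intro j; simp [hgdef, htoEdef]
    simp only [h3, h4] at h2
    have h5 := congrFun h2 t
    rw [Finset.sum_apply] at h5
    simp only [Pi.smul_apply, smul_eq_mul] at h5
    rw [Fin.sum_univ_succ] at h5
    simp only [hGdef, Fin.cons_zero, Fin.cons_succ] at h5
    rw [← h5]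
    ring
  have hpt : pstar t = Real.exp (L t) := (Real.exp_log (hpos t)).symm
  rw [hpt, hLt, Real.exp_add, Real.exp_sum]
  congr 1
  apply Finset.prod_congr rfl
  intro i _
  by_cases h : supports (X i) t <;> simp [hsdef, h]
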